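/- With a fixed vertical pattern value V and horizontal Mogensen exponent w_h < 0 (so that −2w_h > 0), the expected beamforming gain satisfies E[G(m)] = 3η V Γ(1/2 − w_h) / (√π Γ(1 − w_h)), where G(m) = Σ_{c=1}^{3} ρ_c H(α_c) V with ρ_c Bernoulli(η) independent of the uniform angles α_c on intervals of length 2π/3 covering a full circle. -/

import Mathlib

open MeasureTheory ProbabilityTheory Real Set intervalIntegral


lemma betaIntegrable {a b : ℝ} (ha : 0 < a) (hb : 0 < b) :
    IntegrableOn (fun t : ℝ => t ^ (a-1) * (1-t) ^ (b-1)) (Set.Icc 0 1) := by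
  rw [integrableOn_Icc_iff_integrableOn_Ioc]
  have h := (Complex.betaIntegral_convergent (u := (a:ℂ)) (v := (b:ℂ))
    (by simpa using ha) (by simpa using hb)).1
  have h2 := h.re
  apply MeasureTheory.IntegrableOn.congr_fun h2 _ measurableSet_Ioc
  intro x hx
  have h1 : (0:ℝ) ≤ x := le_of_lt hx.1
  have h2' : (0:ℝ) ≤ 1 - x := by linarith [hx.2]
  have ea : ((a:ℂ) - 1) = ((a - 1 : ℝ) : ℂ) := by push_cast; ring
  have eb : ((b:ℂ) - 1) = ((b - 1 : ℝ) : ℂ) := by push_cast; ring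
  have ex : (1 - (x:ℂ)) = ((1 - x : ℝ) : ℂ) := by push_cast; ring
  simp only [ea, eb, ex, ← Complex.ofReal_cpow h1, ← Complex.ofReal_cpow h2',
    ← Complex.ofReal_mul, RCLike.re_to_complex, Complex.ofReal_re]

lemma betaCast (a b : ℝ) :
    Complex.betaIntegral a b
      = ((∫ t in (0:ℝ)..1, t ^ (a-1) * (1-t) ^ (b-1) : ℝ) : ℂ) := by
  rw [Complex.betaIntegral, ← intervalIntegral.integral_ofReal]
  apply intervalIntegral.integral_congr
  intro x hx
  rw [Set.uIcc_of_le (by norm_num : (0:ℝ) ≤ 1)] at hx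
  have h1 : (0:ℝ) ≤ x := hx.1
  have h2 : (0:ℝ) ≤ 1 - x := by linarith [hx.2]
  have ea : ((a:ℂ) - 1) = ((a - 1 : ℝ) : ℂ) := by push_cast; ring
  have eb : ((b:ℂ) - 1) = ((b - 1 : ℝ) : ℂ) := by push_cast; ring
  have ex : (1 - (x:ℂ)) = ((1 - x : ℝ) : ℂ) := by push_cast; ring
  simp only [ea, eb, ex, ← Complex.ofReal_cpow h1, ← Complex.ofReal_cpow h2,
    ← Complex.ofReal_mul]

lemma realBeta {a b : ℝ} (ha : 0 < a) (hb : 0 < b) :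
    ∫ t in (0:ℝ)..1, t ^ (a-1) * (1-t) ^ (b-1) = Gamma a * Gamma b / Gamma (a+b) := by
  have h := Complex.Gamma_mul_Gamma_eq_betaIntegral
    (s := (a:ℂ)) (t := (b:ℂ)) (by simpa using ha) (by simpa using hb)
  rw [betaCast] at h
  have : ((Gamma a * Gamma b : ℝ) : ℂ)
      = ((Gamma (a+b) * ∫ t in (0:ℝ)..1, t ^ (a-1) * (1-t) ^ (b-1) : ℝ) : ℂ) := by
    push_cast
    rw [Complex.Gamma_ofReal, Complex.Gamma_ofReal, ← Complex.ofReal_add, Complex.Gamma_ofReal] at h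
    exact h
  have h2 := Complex.ofReal_injective this
  have hG : Gamma (a+b) ≠ 0 := (Real.Gamma_pos_of_pos (by linarith)).ne'
  field_simp
  linarith [h2]

lemma cosRpowInt {p : ℝ} (hp : 0 < p) :
    ∫ x in (0:ℝ)..(π/2), cos x ^ p
      = Real.sqrt π * Gamma ((p+1)/2) / (2 * Gamma (p/2 + 1)) := by
  set g : ℝ → ℝ := fun t => (1/2) * (t ^ ((1:ℝ)/2 - 1) * (1-t) ^ ((p+1)/2 - 1)) with hg
  have hpi2 : (0:ℝ) < π/2 := by positivity
  have hptw : ∀ x ∈ Ioo (0:ℝ) (π/2),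
      cos x ^ p = (2 * sin x * cos x) • (g ∘ (fun x => sin x ^ 2)) x := by
    intro x hx
    have hs : 0 < sin x := Real.sin_pos_of_pos_of_lt_pi hx.1 (by linarith [hx.2, pi_pos])
    have hc : 0 < cos x := Real.cos_pos_of_mem_Ioo ⟨by linarith [hx.1], hx.2⟩
    simp only [Function.comp, hg, smul_eq_mul]
    have e1 : ((sin x ^ 2 : ℝ)) ^ ((1:ℝ)/2 - 1) = (sin x)⁻¹ := by
      rw [← Real.rpow_natCast (sin x) 2, ← Real.rpow_mul hs.le]
      norm_num
      rw [Real.rpow_neg_one]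
    have e2 : (1 - sin x ^ 2 : ℝ) = cos x ^ 2 := (Real.cos_sq' x).symm
    have e3 : ((cos x ^ 2 : ℝ)) ^ ((p+1)/2 - 1) = cos x ^ (p - 1 : ℝ) := by
      rw [← Real.rpow_natCast (cos x) 2, ← Real.rpow_mul hc.le]
      norm_num
      ring_nf
    rw [e1, e2, e3, show p = 1 + (p-1) by ring, Real.rpow_add hc, Real.rpow_one]
    field_simp
    ring
  have hne : ∀ᵐ x : ℝ, x ∉ ({0, π/2} : Set ℝ) :=
    (MeasureTheory.compl_mem_ae_iff).2
      (((Set.finite_singleton (π/2)).insert 0).measure_zero volume)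
  have hae : ∀ᵐ x : ℝ, x ∈ Set.uIoc 0 (π/2) →
      cos x ^ p = (2 * sin x * cos x) • (g ∘ (fun x => sin x ^ 2)) x := by
    filter_upwards [hne] with x hx hmem
    rw [Set.uIoc_of_le hpi2.le] at hmem
    simp only [Set.mem_insert_iff, Set.mem_singleton_iff, not_or] at hx
    exact hptw x ⟨lt_of_le_of_ne hmem.1.le (Ne.symm hx.1), lt_of_le_of_ne hmem.2 hx.2⟩
  have key : ∫ x in (0:ℝ)..(π/2), (2 * sin x * cos x) • (g ∘ (fun x => sin x ^ 2)) x
      = ∫ u in ((sin (0:ℝ))^2)..((sin (π/2))^2), g u := by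
    apply intervalIntegral.integral_comp_smul_deriv''' (f := fun x => sin x ^ 2)
      (f' := fun x => 2 * sin x * cos x)
    · exact (Real.continuous_sin.pow 2).continuousOn
    · intro x hx
      have : HasDerivAt (fun x => sin x ^ 2) (2 * sin x * cos x) x := by
        simpa [mul_comm, mul_assoc] using (Real.hasDerivAt_sin x).fun_pow 2
      exact this.hasDerivWithinAt
    · have himg : (fun x => sin x ^ 2) '' Ioo (min 0 (π/2)) (max 0 (π/2)) ⊆ Ioo 0 1 := by
        rintro _ ⟨x, hx, rfl⟩
        rw [min_eq_left hpi2.le, max_eq_right hpi2.le] at hx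
        have hs : 0 < sin x := Real.sin_pos_of_pos_of_lt_pi hx.1 (by linarith [hx.2, pi_pos])
        have hs1 : sin x < 1 := by
          have := Real.cos_pos_of_mem_Ioo ⟨by linarith [hx.1], hx.2⟩
          nlinarith [Real.sin_sq_add_cos_sq x]
        dsimp only
        constructor <;> nlinarith
      apply ContinuousOn.mono _ himg
      apply ContinuousOn.mul continuousOn_const
      apply ContinuousOn.mul
      · intro t ht
        exact (Real.continuousAt_rpow_const t _ (Or.inl ht.1.ne')).continuousWithinAt
      · intro t ht
        exact ((Real.continuousAt_rpow_const (1-t) _ (Or.inl (by linarith [ht.2]))).comp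
          (by fun_prop)).continuousWithinAt
    · have himg : (fun x => sin x ^ 2) '' uIcc 0 (π/2) ⊆ Icc 0 1 := by
        rintro _ ⟨x, hx, rfl⟩
        dsimp only
        constructor
        · positivity
        · nlinarith [Real.neg_one_le_sin x, Real.sin_le_one x]
      exact MeasureTheory.IntegrableOn.mono_set
        ((betaIntegrable one_half_pos (by linarith : (0:ℝ) < (p+1)/2)).const_mul (1/2)) himg
    · have hcont : Continuous fun x : ℝ => cos x ^ p := by
        rw [continuous_iff_continuousAt]
        intro x
        exact (Real.continuousAt_rpow_const _ _ (Or.inr hp.le)).comp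
          Real.continuous_cos.continuousAt
      have hI : IntegrableOn (fun x : ℝ => cos x ^ p) (uIcc 0 (π/2)) :=
        hcont.continuousOn.integrableOn_uIcc
      apply hI.congr_fun_ae
      rw [uIcc_of_le hpi2.le, Filter.EventuallyEq, MeasureTheory.ae_restrict_iff' measurableSet_Icc]
      filter_upwards [hne] with x hx hmem
      simp only [Set.mem_insert_iff, Set.mem_singleton_iff, not_or] at hx
      exact hptw x ⟨lt_of_le_of_ne hmem.1 (Ne.symm hx.1), lt_of_le_of_ne hmem.2 hx.2⟩
  rw [intervalIntegral.integral_congr_ae hae, key]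
  rw [Real.sin_zero, Real.sin_pi_div_two]
  norm_num
  rw [intervalIntegral.integral_const_mul]
  rw [realBeta one_half_pos (by linarith : (0:ℝ) < (p+1)/2)]
  rw [Real.Gamma_one_half_eq]
  rw [show (1:ℝ)/2 + (p+1)/2 = p/2 + 1 by ring]
  ring

lemma absCosInt {p : ℝ} (hp : 0 < p) (hc : ∫ x in (0:ℝ)..(π/2), cos x ^ p
      = Real.sqrt π * Gamma ((p+1)/2) / (2 * Gamma (p/2 + 1))) (ψ : ℝ) :
    ∫ θ in (0:ℝ)..(2*π), |cos (ψ - θ)| ^ p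
      = 2 * Real.sqrt π * Gamma ((p+1)/2) / Gamma (p/2 + 1) := by
  have hcont : Continuous fun x : ℝ => |cos x| ^ p := by
    rw [continuous_iff_continuousAt]
    intro x
    exact (Real.continuousAt_rpow_const _ _ (Or.inr hp.le)).comp
      (Real.continuous_cos.abs.continuousAt)
  have hint : ∀ a b : ℝ, IntervalIntegrable (fun x : ℝ => |cos x| ^ p) volume a b :=
    fun a b => hcont.intervalIntegrable a b
  have hper : Function.Periodic (fun x : ℝ => |cos x| ^ p) (2*π) := by
    intro x; simp [Real.cos_add_two_pi]
  have h1 : ∫ θ in (0:ℝ)..(2*π), |cos (ψ - θ)| ^ p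
      = ∫ x in (ψ - 2*π)..ψ, |cos x| ^ p := by
    simpa using intervalIntegral.integral_comp_sub_left (fun x : ℝ => |cos x| ^ p) ψ (a := 0) (b := 2*π)
  have h2 : ∫ x in (ψ - 2*π)..ψ, |cos x| ^ p = ∫ x in (0:ℝ)..(2*π), |cos x| ^ p := by
    have := hper.intervalIntegral_add_eq (ψ - 2*π) 0
    simpa using this
  have h3 : ∫ x in (π:ℝ)..(2*π), |cos x| ^ p = ∫ x in (0:ℝ)..π, |cos x| ^ p := by
    have := intervalIntegral.integral_comp_add_right (a := (0:ℝ)) (b := π)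
      (fun x : ℝ => |cos x| ^ p) π
    rw [zero_add, show π + π = 2*π by ring] at this
    rw [← this]
    apply intervalIntegral.integral_congr
    intro x _
    simp [Real.cos_add_pi]
  have h4 : ∫ x in (π/2:ℝ)..π, |cos x| ^ p = ∫ x in (0:ℝ)..(π/2), |cos x| ^ p := by
    have := intervalIntegral.integral_comp_sub_left (a := (0:ℝ)) (b := π/2)
      (fun x : ℝ => |cos x| ^ p) π
    rw [show π - π/2 = π/2 by ring, show π - 0 = π by ring] at this
    rw [← this]
    apply (intervalIntegral.integral_congr _).symm
    intro x _
    simp [Real.cos_pi_sub]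
  have h5 : ∫ x in (0:ℝ)..(π/2), |cos x| ^ p = ∫ x in (0:ℝ)..(π/2), cos x ^ p := by
    apply intervalIntegral.integral_congr
    intro x hx
    rw [uIcc_of_le (by positivity : (0:ℝ) ≤ π/2)] at hx
    dsimp only
    rw [abs_of_nonneg (Real.cos_nonneg_of_mem_Icc ⟨by linarith [hx.1, pi_pos], hx.2⟩)]
  have h6 : ∫ x in (0:ℝ)..(2*π), |cos x| ^ p
      = (∫ x in (0:ℝ)..π, |cos x| ^ p) + ∫ x in (π:ℝ)..(2*π), |cos x| ^ p :=
    (intervalIntegral.integral_add_adjacent_intervals (hint 0 π) (hint π (2*π))).symm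
  have h7 : ∫ x in (0:ℝ)..π, |cos x| ^ p
      = (∫ x in (0:ℝ)..(π/2), |cos x| ^ p) + ∫ x in (π/2:ℝ)..π, |cos x| ^ p :=
    (intervalIntegral.integral_add_adjacent_intervals (hint 0 (π/2)) (hint (π/2) π)).symm
  rw [h1, h2, h6, h3, h7, h4, h5, hc]
  have hG : Gamma (p/2 + 1) ≠ 0 := (Real.Gamma_pos_of_pos (by linarith)).ne'
  field_simp
  ring

/-- Expected 3D beamforming gain with fixed vertical pattern value V:
E[Σ_c ρ_c H(α_c) V] = 3ηV Γ(1/2 − w_h)/(√π Γ(1 − w_h)), where ρ_c ∼ Bernoulli(η)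
independent of the uniform sector angles θ_c, α_c = ψ − θ_c, and
H(α) = |cos α|^{−2w_h} with w_h < 0. -/
theorem expected_beamforming_gain
    {Ω : Type*} [MeasureSpace Ω] (μ : Measure Ω) [IsProbabilityMeasure μ]
    (η : ℝ) (hη : η ∈ Set.Icc (0 : ℝ) 1) (V wh ψ : ℝ) (hV : 0 < V) (hwh : wh < 0)
    (ρ : Fin 3 → Ω → ℝ) (θ : Fin 3 → Ω → ℝ)
    (hρmeas : ∀ c, Measurable (ρ c)) (hθmeas : ∀ c, Measurable (θ c))
    (hρ : ∀ c, μ {ω | ρ c ω = 1} = ENNReal.ofReal η ∧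
               μ {ω | ρ c ω = 0} = ENNReal.ofReal (1 - η))
    (hθ : ∀ c : Fin 3, pdf.IsUniform (θ c)
      (Set.Icc (π / 3 * (2 * ((c : ℝ) + 1) - 1) - π / 3)
               (π / 3 * (2 * ((c : ℝ) + 1) - 1) + π / 3)) μ)
    (hindep : ∀ c, IndepFun (ρ c) (θ c) μ) :
    ∫ ω, (∑ c : Fin 3, ρ c ω * |cos (ψ - θ c ω)| ^ (-(2 * wh)) * V) ∂μ
      = 3 * η * V * Gamma (1 / 2 - wh) / (Real.sqrt π * Gamma (1 - wh)) := by
  set p : ℝ := -(2 * wh) with hpdef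
  have hp : 0 < p := by simp only [hpdef]; linarith
  set f : ℝ → ℝ := fun x => |cos (ψ - x)| ^ p with hf
  have hfcont : Continuous f := by
    rw [continuous_iff_continuousAt]
    intro x
    exact (Real.continuousAt_rpow_const _ _ (Or.inr hp.le)).comp
      ((Real.continuous_cos.comp (continuous_const.sub continuous_id)).abs.continuousAt)
  have hf01 : ∀ x, 0 ≤ f x ∧ f x ≤ 1 := by
    intro x
    refine ⟨Real.rpow_nonneg (abs_nonneg _) _, Real.rpow_le_one (abs_nonneg _) (abs_cos_le_one _) hp.le⟩
  -- a.e. ρ ∈ {0,1}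
  have hρae : ∀ c, ∀ᵐ ω ∂μ, ρ c ω = 1 ∨ ρ c ω = 0 := by
    intro c
    have hA : MeasurableSet {ω | ρ c ω = 1} := hρmeas c (measurableSet_singleton 1)
    have hB : MeasurableSet {ω | ρ c ω = 0} := hρmeas c (measurableSet_singleton 0)
    have hd : Disjoint {ω | ρ c ω = 1} {ω | ρ c ω = 0} := by
      rw [Set.disjoint_left]
      rintro ω h1 h0
      simp only [Set.mem_setOf_eq] at h1 h0
      rw [h1] at h0; norm_num at h0
    have hsum : μ ({ω | ρ c ω = 1} ∪ {ω | ρ c ω = 0}) = 1 := by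
      rw [measure_union hd hB, (hρ c).1, (hρ c).2,
        ← ENNReal.ofReal_add hη.1 (by linarith [hη.2])]
      norm_num
    have hcompl : μ ({ω | ρ c ω = 1} ∪ {ω | ρ c ω = 0})ᶜ = 0 := by
      rw [measure_compl (hA.union hB) (measure_ne_top μ _), hsum, measure_univ, tsub_self]
    filter_upwards [(MeasureTheory.compl_mem_ae_iff).2 hcompl] with ω hω
    exact or_iff_not_imp_left.mpr (by simpa using hω)
  -- E[ρ c] = η
  have Eρ : ∀ c, ∫ ω, ρ c ω ∂μ = η := by
    intro c
    have hA : MeasurableSet {ω | ρ c ω = 1} := hρmeas c (measurableSet_singleton 1)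
    have : ∫ ω, ρ c ω ∂μ = ∫ ω, Set.indicator {ω | ρ c ω = 1} (fun _ => (1:ℝ)) ω ∂μ := by
      apply MeasureTheory.integral_congr_ae
      filter_upwards [hρae c] with ω hω
      rcases hω with h | h
      · rw [h, Set.indicator_of_mem (by simpa using h)]
      · rw [h, Set.indicator_of_notMem (by simp [h])]
    rw [this, integral_indicator_const _ hA, measureReal_def, (hρ c).1]
    simp [ENNReal.toReal_ofReal hη.1]
  -- E[f (θ c)] via uniform
  have Eθ : ∀ c : Fin 3, ∫ ω, f (θ c ω) ∂μ
      = (3 / (2*π)) * ∫ x in (2*π*(c:ℝ)/3)..(2*π*((c:ℝ)+1)/3), f x := by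
    intro c
    set a := π / 3 * (2 * ((c : ℝ) + 1) - 1) - π / 3 with ha
    set b := π / 3 * (2 * ((c : ℝ) + 1) - 1) + π / 3 with hb
    have hab : a ≤ b := by
      rw [ha, hb]; nlinarith [pi_pos]
    have hmap : Measure.map (θ c) μ = ProbabilityTheory.cond volume (Set.Icc a b) := hθ c
    have h1 : ∫ ω, f (θ c ω) ∂μ = ∫ x, f x ∂(Measure.map (θ c) μ) :=
      (integral_map (hθmeas c).aemeasurable hfcont.aestronglyMeasurable).symm
    rw [h1, hmap, ProbabilityTheory.cond, MeasureTheory.integral_smul_measure]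
    have hvol : volume (Set.Icc a b) = ENNReal.ofReal (2*π/3) := by
      rw [Real.volume_Icc]
      congr 1
      rw [ha, hb]; ring
    rw [hvol, MeasureTheory.integral_Icc_eq_integral_Ioc,
      ← intervalIntegral.integral_of_le hab]
    rw [show a = 2*π*(c:ℝ)/3 by rw [ha]; ring, show b = 2*π*((c:ℝ)+1)/3 by rw [hb]; ring]
    rw [ENNReal.toReal_inv, ENNReal.toReal_ofReal (by positivity)]
    rw [smul_eq_mul]
    congr 1
    rw [inv_eq_one_div]
    field_simp
  -- integrability of each summand
  have hXmeas : ∀ c, Measurable fun ω => ρ c ω * f (θ c ω) * V := fun c =>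
    ((hρmeas c).mul (hfcont.measurable.comp (hθmeas c))).mul_const V
  have hXint : ∀ c, Integrable (fun ω => ρ c ω * f (θ c ω) * V) μ := by
    intro c
    apply Integrable.mono' (integrable_const V) (hXmeas c).aestronglyMeasurable
    filter_upwards [hρae c] with ω hω
    have hρ01 : 0 ≤ ρ c ω ∧ ρ c ω ≤ 1 := by rcases hω with h | h <;> rw [h] <;> norm_num
    have := hf01 (θ c ω)
    rw [Real.norm_eq_abs, abs_mul, abs_mul, abs_of_nonneg hρ01.1,
      abs_of_nonneg this.1, abs_of_pos hV]
    have hm : ρ c ω * f (θ c ω) ≤ 1 := mul_le_one₀ hρ01.2 this.1 this.2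
    nlinarith [mul_nonneg hρ01.1 this.1]
  -- per-c expectation
  have EX : ∀ c, ∫ ω, ρ c ω * f (θ c ω) * V ∂μ
      = η * ((3 / (2*π)) * ∫ x in (2*π*(c:ℝ)/3)..(2*π*((c:ℝ)+1)/3), f x) * V := by
    intro c
    have hind : IndepFun (ρ c) (f ∘ θ c) μ :=
      (hindep c).comp measurable_id hfcont.measurable
    calc ∫ ω, ρ c ω * f (θ c ω) * V ∂μ
        = (∫ ω, ρ c ω * f (θ c ω) ∂μ) * V := by rw [MeasureTheory.integral_mul_const]
      _ = (∫ ω, ρ c ω ∂μ) * (∫ ω, f (θ c ω) ∂μ) * V := by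
          have h := hind.integral_mul_eq_mul_integral (hρmeas c).aestronglyMeasurable
            (hfcont.measurable.comp (hθmeas c)).aestronglyMeasurable
          have h' : ∫ ω, ρ c ω * f (θ c ω) ∂μ
              = (∫ ω, ρ c ω ∂μ) * ∫ ω, f (θ c ω) ∂μ := h
          rw [h']
      _ = _ := by rw [Eρ c, Eθ c]
  -- sum up
  rw [integral_finset_sum _ (fun c _ => hXint c)]
  simp only [EX]
  rw [Fin.sum_univ_three]
  have hsum3 : (∫ x in (2*π*((0:Fin 3):ℝ)/3)..(2*π*(((0:Fin 3):ℝ)+1)/3), f x)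
      + (∫ x in (2*π*((1:Fin 3):ℝ)/3)..(2*π*(((1:Fin 3):ℝ)+1)/3), f x)
      + (∫ x in (2*π*((2:Fin 3):ℝ)/3)..(2*π*(((2:Fin 3):ℝ)+1)/3), f x)
      = ∫ x in (0:ℝ)..(2*π), f x := by
    have hi : ∀ a b : ℝ, IntervalIntegrable f volume a b := fun a b =>
      hfcont.intervalIntegrable a b
    have e0 : ((0:Fin 3):ℝ) = 0 := by norm_num
    have e1 : ((1:Fin 3):ℝ) = 1 := by norm_num
    have e2 : ((2:Fin 3):ℝ) = 2 := by norm_num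
    rw [e0, e1, e2]
    rw [show 2*π*(0:ℝ)/3 = 0 by ring, show 2*π*((0:ℝ)+1)/3 = 2*π/3 by ring,
      show 2*π*(1:ℝ)/3 = 2*π/3 by ring, show 2*π*((1:ℝ)+1)/3 = 4*π/3 by ring,
      show 2*π*(2:ℝ)/3 = 4*π/3 by ring, show 2*π*((2:ℝ)+1)/3 = 2*π by ring]
    rw [intervalIntegral.integral_add_adjacent_intervals (hi 0 (2*π/3)) (hi (2*π/3) (4*π/3)),
      intervalIntegral.integral_add_adjacent_intervals (hi 0 (4*π/3)) (hi (4*π/3) (2*π))]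
  have habs : ∫ x in (0:ℝ)..(2*π), f x
      = 2 * Real.sqrt π * Gamma ((p+1)/2) / Gamma (p/2 + 1) := absCosInt hp (cosRpowInt hp) ψ
  have hg1 : (p+1)/2 = 1/2 - wh := by rw [hpdef]; ring
  have hg2 : p/2 + 1 = 1 - wh := by rw [hpdef]; ring
  rw [hg1, hg2] at habs
  have hGpos : 0 < Gamma (1 - wh) := Real.Gamma_pos_of_pos (by linarith)
  have hsq : Real.sqrt π * Real.sqrt π = π := Real.mul_self_sqrt pi_pos.le
  have hsπ : Real.sqrt π ≠ 0 := by positivity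
  -- combine
  have : η * (3 / (2*π) * ∫ x in (2*π*((0:Fin 3):ℝ)/3)..(2*π*(((0:Fin 3):ℝ)+1)/3), f x) * V
      + η * (3 / (2*π) * ∫ x in (2*π*((1:Fin 3):ℝ)/3)..(2*π*(((1:Fin 3):ℝ)+1)/3), f x) * V
      + η * (3 / (2*π) * ∫ x in (2*π*((2:Fin 3):ℝ)/3)..(2*π*(((2:Fin 3):ℝ)+1)/3), f x) * V
      = η * (3 / (2*π)) * V * (∫ x in (0:ℝ)..(2*π), f x) := by
    rw [← hsum3]; ring
  rw [this, habs]
  rw [show (2*π:ℝ) = 2*(Real.sqrt π * Real.sqrt π) by rw [hsq]]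
  field_simp
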